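/- Let g be 2π-periodic and α-Hölder (α ∈ (0,1)) and u(re^{iφ}) = (1-r²)/(2π) ∫_{-π}^{π} g(τ)/(1 + r² - 2r cos(τ-φ)) dτ for r > 1. Then for every r > 1 and φ₁, φ₂ with |φ₁-φ₂| ≤ π, |u(re^{iφ₁}) - u(re^{iφ₂})| ≤ C [g]_{0,α} |re^{iφ₁} - re^{iφ₂}|^α. -/

import Mathlib

open Real

/-- Hölder functions are continuous. -/
lemma holder_cont {g : ℝ → ℝ} {Cg α : ℝ} (hα : 0 < α)
    (h : ∀ x y, |g x - g y| ≤ Cg * |x - y| ^ α) : Continuous g := by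
  rw [continuous_iff_continuousAt]
  intro x
  rw [ContinuousAt, ← tendsto_sub_nhds_zero_iff]
  have habs : Filter.Tendsto (fun y : ℝ => |y - x|) (nhds x) (nhds 0) := by
    have : Continuous fun y : ℝ => |y - x| := by continuity
    simpa using this.tendsto x
  have hpow : Filter.Tendsto (fun y : ℝ => |y - x| ^ α) (nhds x) (nhds 0) := by
    have hc : ContinuousAt (fun t : ℝ => t ^ α) 0 :=
      Real.continuousAt_rpow_const 0 α (Or.inr hα.le)
    have := hc.tendsto.comp habs
    simpa [Function.comp_def, Real.zero_rpow hα.ne'] using this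
  have h0 : Filter.Tendsto (fun y : ℝ => Cg * |y - x| ^ α) (nhds x) (nhds 0) := by
    simpa using hpow.const_mul Cg
  exact squeeze_zero_norm (fun y => by simpa using h y x) h0

lemma arctan_le_self {x : ℝ} (hx : 0 ≤ x) : Real.arctan x ≤ x := by
  have h0 : 0 ≤ Real.arctan x := by
    rw [← Real.arctan_zero]
    exact Real.arctan_strictMono.monotone hx
  calc Real.arctan x ≤ Real.tan (Real.arctan x) :=
        Real.le_tan h0 (Real.arctan_lt_pi_div_two x)
    _ = x := Real.tan_arctan x

/-- chord length: `|r e^{iφ₁} - r e^{iφ₂}| = 2 r |sin ((φ₁-φ₂)/2)|` -/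
lemma chord_eq (r φ₁ φ₂ : ℝ) (hr : 0 ≤ r) :
    ‖(r : ℂ) * Complex.exp (φ₁ * Complex.I)
      - (r : ℂ) * Complex.exp (φ₂ * Complex.I)‖
      = 2 * r * |Real.sin ((φ₁ - φ₂) / 2)| := by
  have hfac : (r : ℂ) * Complex.exp (φ₁ * Complex.I) - (r : ℂ) * Complex.exp (φ₂ * Complex.I)
      = (r : ℂ) * Complex.exp (φ₂ * Complex.I)
        * (Complex.exp ((↑(φ₁ - φ₂)) * Complex.I) - 1) := by
    rw [mul_sub, mul_one]
    congr 1
    rw [mul_assoc, ← Complex.exp_add]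
    push_cast
    ring_nf
  rw [hfac, norm_mul, norm_mul, Complex.norm_real, Real.norm_eq_abs, Complex.norm_exp_ofReal_mul_I,
    abs_of_nonneg hr, mul_one]
  have h1 : Complex.exp ((↑(φ₁ - φ₂)) * Complex.I) - 1
      = Complex.mk (Real.cos (φ₁ - φ₂) - 1) (Real.sin (φ₁ - φ₂)) := by
    rw [Complex.exp_mul_I]
    apply Complex.ext <;>
      simp [← Complex.ofReal_sub, Complex.cos_ofReal_re, Complex.sin_ofReal_re,
        Complex.cos_ofReal_im, Complex.sin_ofReal_im]
  rw [h1]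
  rw [Complex.norm_def, Complex.normSq_mk]
  have h2 : (Real.cos (φ₁ - φ₂) - 1) * (Real.cos (φ₁ - φ₂) - 1)
      + Real.sin (φ₁ - φ₂) * Real.sin (φ₁ - φ₂)
      = 4 * ((1 - Real.cos (φ₁ - φ₂)) / 2) := by
    have := Real.sin_sq_add_cos_sq (φ₁ - φ₂)
    nlinarith
  rw [h2, show (4 : ℝ) * ((1 - Real.cos (φ₁ - φ₂)) / 2)
      = 2 ^ 2 * ((1 - Real.cos (φ₁ - φ₂)) / 2) by ring,
    Real.sqrt_mul (by positivity), Real.sqrt_sq (by norm_num),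
    ← Real.abs_sin_half]
  ring

lemma integral_inv_quad {a b : ℝ} (ha : 0 < a) (hb : 0 < b) :
    (∫ τ in (-π)..π, 1 / (a ^ 2 + b ^ 2 * τ ^ 2)) = 2 / (a * b) * Real.arctan (b / a * π) := by
  have hanti : ∀ τ : ℝ, HasDerivAt (fun t : ℝ => 1 / (a * b) * Real.arctan (b / a * t))
      (1 / (a ^ 2 + b ^ 2 * τ ^ 2)) τ := by
    intro τ
    have h1 : HasDerivAt (fun t : ℝ => b / a * t) (b / a) τ := by
      simpa using (hasDerivAt_id τ).const_mul (b / a)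
    have h2 := (Real.hasDerivAt_arctan (b / a * τ)).comp τ h1
    have h3 := h2.const_mul (1 / (a * b))
    have hq : (0:ℝ) < a ^ 2 + b ^ 2 * τ ^ 2 := by positivity
    have hq2 : (0:ℝ) < 1 + (b / a * τ) ^ 2 := by positivity
    have e : 1 / (a ^ 2 + b ^ 2 * τ ^ 2) = 1 / (a * b) * (1 / (1 + (b / a * τ) ^ 2) * (b / a)) := by
      field_simp
    rw [e]; exact h3
  have hcont : Continuous fun τ : ℝ => 1 / (a ^ 2 + b ^ 2 * τ ^ 2) := by
    apply Continuous.div continuous_const (by continuity)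
    intro τ; positivity
  rw [intervalIntegral.integral_eq_sub_of_hasDerivAt (fun τ _ => hanti τ)
    (hcont.intervalIntegrable _ _)]
  rw [show b / a * (-π) = -(b / a * π) by ring, Real.arctan_neg]
  ring

set_option maxHeartbeats 1000000 in
/-- Key kernel bound: `(r²-1)/(2π) ∫ 1/(1+r²-2r cos τ) ≤ 3`. -/
lemma kernel_bound {r : ℝ} (hr : 1 < r) :
    (r ^ 2 - 1) / (2 * π) * ∫ τ in (-π)..π, 1 / (1 + r ^ 2 - 2 * r * Real.cos τ) ≤ 3 := by
  have hπ := Real.pi_pos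
  obtain ⟨s, hs1, hs2⟩ : ∃ s : ℝ, 1 ≤ s ∧ s ^ 2 = r :=
    ⟨Real.sqrt r, by
      rw [show (1:ℝ) = Real.sqrt 1 by simp]
      exact Real.sqrt_le_sqrt (by linarith), Real.sq_sqrt (by linarith)⟩
  have ha : 0 < r - 1 := by linarith
  have hb : 0 < 2 * s / π := by positivity
  have hD : ∀ τ : ℝ, 0 < 1 + r ^ 2 - 2 * r * Real.cos τ := by
    intro τ
    nlinarith [Real.cos_le_one τ, Real.neg_one_le_cos τ]
  have hb2 : (2 * s / π) ^ 2 = 4 * r / π ^ 2 := by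
    field_simp; nlinarith [hs2]
  have hpt : ∀ τ ∈ Set.Icc (-π) π,
      1 / (1 + r ^ 2 - 2 * r * Real.cos τ)
        ≤ 1 / ((r - 1) ^ 2 + (2 * s / π) ^ 2 * τ ^ 2) := by
    intro τ hτ
    have habs : |τ| ≤ π := abs_le.2 ⟨hτ.1, hτ.2⟩
    have hcos := Real.cos_le_one_sub_mul_cos_sq habs
    have hq : 0 < (r - 1) ^ 2 + (2 * s / π) ^ 2 * τ ^ 2 := by positivity
    apply one_div_le_one_div_of_le hq
    rw [hb2]
    have hmul : 2 * r * Real.cos τ ≤ 2 * r * (1 - 2 / π ^ 2 * τ ^ 2) :=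
      mul_le_mul_of_nonneg_left hcos (by linarith)
    have hexp : 2 * r * (1 - 2 / π ^ 2 * τ ^ 2) = 2 * r - 4 * r / π ^ 2 * τ ^ 2 := by ring
    rw [hexp] at hmul
    nlinarith [hmul]
  have hcont : Continuous fun τ : ℝ => 1 / ((r - 1) ^ 2 + (2 * s / π) ^ 2 * τ ^ 2) := by
    apply Continuous.div continuous_const (by continuity)
    intro τ; positivity
  have hval : (∫ τ in (-π)..π, 1 / ((r - 1) ^ 2 + (2 * s / π) ^ 2 * τ ^ 2))
      = 2 / ((r - 1) * (2 * s / π)) * Real.arctan ((2 * s / π) / (r - 1) * π) :=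
    integral_inv_quad ha hb
  have hDcont : Continuous fun τ : ℝ => 1 / (1 + r ^ 2 - 2 * r * Real.cos τ) := by
    apply Continuous.div continuous_const (by continuity)
    intro τ; exact (hD τ).ne'
  have hmono : (∫ τ in (-π)..π, 1 / (1 + r ^ 2 - 2 * r * Real.cos τ))
      ≤ ∫ τ in (-π)..π, 1 / ((r - 1) ^ 2 + (2 * s / π) ^ 2 * τ ^ 2) :=
    intervalIntegral.integral_mono_on (by linarith) (hDcont.intervalIntegrable _ _)
      (hcont.intervalIntegrable _ _) hpt
  have hpre : 0 < (r ^ 2 - 1) / (2 * π) := div_pos (by nlinarith) (by linarith)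
  have hchain : (r ^ 2 - 1) / (2 * π) * ∫ τ in (-π)..π, 1 / (1 + r ^ 2 - 2 * r * Real.cos τ)
      ≤ (r ^ 2 - 1) / (2 * π)
        * (2 / ((r - 1) * (2 * s / π)) * Real.arctan ((2 * s / π) / (r - 1) * π)) := by
    apply mul_le_mul_of_nonneg_left _ hpre.le
    rw [← hval]; exact hmono
  refine hchain.trans ?_
  have hAB : 0 < 2 / ((r - 1) * (2 * s / π)) := by positivity
  rcases le_or_gt 2 r with h2 | h2
  · have harc : Real.arctan ((2 * s / π) / (r - 1) * π) ≤ (2 * s / π) / (r - 1) * π :=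
      arctan_le_self (by positivity)
    have hstep : (r ^ 2 - 1) / (2 * π)
        * (2 / ((r - 1) * (2 * s / π)) * Real.arctan ((2 * s / π) / (r - 1) * π))
        ≤ (r ^ 2 - 1) / (2 * π)
          * (2 / ((r - 1) * (2 * s / π)) * ((2 * s / π) / (r - 1) * π)) :=
      mul_le_mul_of_nonneg_left (mul_le_mul_of_nonneg_left harc hAB.le) hpre.le
    refine hstep.trans ?_
    have heq : (r ^ 2 - 1) / (2 * π)
        * (2 / ((r - 1) * (2 * s / π)) * ((2 * s / π) / (r - 1) * π))
        = (r + 1) / (r - 1) := by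
      field_simp
      ring
    rw [heq, div_le_iff₀ (by linarith)]
    linarith
  · have harc : Real.arctan ((2 * s / π) / (r - 1) * π) ≤ π / 2 :=
      (Real.arctan_lt_pi_div_two _).le
    have hstep : (r ^ 2 - 1) / (2 * π)
        * (2 / ((r - 1) * (2 * s / π)) * Real.arctan ((2 * s / π) / (r - 1) * π))
        ≤ (r ^ 2 - 1) / (2 * π) * (2 / ((r - 1) * (2 * s / π)) * (π / 2)) :=
      mul_le_mul_of_nonneg_left (mul_le_mul_of_nonneg_left harc hAB.le) hpre.le
    refine hstep.trans ?_
    have heq : (r ^ 2 - 1) / (2 * π) * (2 / ((r - 1) * (2 * s / π)) * (π / 2))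
        = π * (r + 1) / (4 * s) := by
      have h1 : r ^ 2 - 1 = (r - 1) * (r + 1) := by ring
      field_simp
      ring
    rw [heq, div_le_iff₀ (by positivity)]
    nlinarith [Real.pi_le_four, hs1]

theorem exterior_poisson_angular_holder (α : ℝ) (hα : α ∈ Set.Ioo (0 : ℝ) 1) :
    ∃ C > 0, ∀ (g : ℝ → ℝ) (Cg : ℝ),
      (∀ x, g (x + 2 * π) = g x) →
      (∀ x y, |g x - g y| ≤ Cg * |x - y| ^ α) →
      ∀ r φ₁ φ₂ : ℝ, 1 < r → |φ₁ - φ₂| ≤ π →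
        |((1 - r ^ 2) / (2 * π) * ∫ τ in (-π)..π,
            g τ / (1 + r ^ 2 - 2 * r * Real.cos (τ - φ₁)))
          - (1 - r ^ 2) / (2 * π) * ∫ τ in (-π)..π,
            g τ / (1 + r ^ 2 - 2 * r * Real.cos (τ - φ₂))|
          ≤ C * Cg
            * ‖(r : ℂ) * Complex.exp (φ₁ * Complex.I)
                - (r : ℂ) * Complex.exp (φ₂ * Complex.I)‖ ^ α := by
  obtain ⟨hα0, hα1⟩ := hα
  have hπ := Real.pi_pos
  refine ⟨3 * (π / 2), by positivity, ?_⟩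
  intro g Cg hper hhold r φ₁ φ₂ hr hφ
  have hCg : 0 ≤ Cg := by
    have := hhold 0 1
    have h1 : |(0:ℝ) - 1| ^ α = 1 := by norm_num
    rw [h1, mul_one] at this
    exact le_trans (abs_nonneg _) this
  have hgc : Continuous g := holder_cont hα0 hhold
  have hD : ∀ τ : ℝ, 0 < 1 + r ^ 2 - 2 * r * Real.cos τ := by
    intro τ
    nlinarith [Real.cos_le_one τ, Real.neg_one_le_cos τ]
  have hDcont : Continuous fun τ : ℝ => 1 + r ^ 2 - 2 * r * Real.cos τ := by continuity
  -- Step 1: shift the integrals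
  have hshift : ∀ φ : ℝ, (∫ τ in (-π)..π, g τ / (1 + r ^ 2 - 2 * r * Real.cos (τ - φ)))
      = ∫ τ in (-π)..π, g (τ + φ) / (1 + r ^ 2 - 2 * r * Real.cos τ) := by
    intro φ
    have hcomp := intervalIntegral.integral_comp_add_right (a := -π - φ) (b := π - φ)
      (f := fun τ => g τ / (1 + r ^ 2 - 2 * r * Real.cos (τ - φ))) φ
    have hsimp : ∀ x : ℝ, g (x + φ) / (1 + r ^ 2 - 2 * r * Real.cos (x + φ - φ))
        = g (x + φ) / (1 + r ^ 2 - 2 * r * Real.cos x) := by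
      intro x; rw [add_sub_cancel_right]
    rw [show -π - φ + φ = -π by ring, show π - φ + φ = π by ring] at hcomp
    have hper2 : Function.Periodic
        (fun τ => g (τ + φ) / (1 + r ^ 2 - 2 * r * Real.cos τ)) (2 * π) := by
      intro x
      simp only
      rw [Real.cos_add_two_pi, show x + 2 * π + φ = x + φ + 2 * π by ring, hper]
    have hp := hper2.intervalIntegral_add_eq (-π - φ) (-π)
    rw [show -π - φ + 2 * π = π - φ by ring, show -π + 2 * π = π by ring] at hp
    calc (∫ τ in (-π)..π, g τ / (1 + r ^ 2 - 2 * r * Real.cos (τ - φ)))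
        = ∫ x in (-π - φ)..(π - φ), g (x + φ) / (1 + r ^ 2 - 2 * r * Real.cos (x + φ - φ)) :=
          hcomp.symm
      _ = ∫ x in (-π - φ)..(π - φ), g (x + φ) / (1 + r ^ 2 - 2 * r * Real.cos x) := by
          simp only [hsimp]
      _ = ∫ τ in (-π)..π, g (τ + φ) / (1 + r ^ 2 - 2 * r * Real.cos τ) := hp
  -- integrability facts
  have hint : ∀ φ : ℝ, IntervalIntegrable
      (fun τ => g (τ + φ) / (1 + r ^ 2 - 2 * r * Real.cos τ)) MeasureTheory.volume (-π) π := by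
    intro φ
    exact (Continuous.div (hgc.comp (by continuity)) hDcont fun τ => (hD τ).ne').intervalIntegrable _ _
  have hintK : IntervalIntegrable (fun τ => 1 / (1 + r ^ 2 - 2 * r * Real.cos τ))
      MeasureTheory.volume (-π) π :=
    (Continuous.div continuous_const hDcont fun τ => (hD τ).ne').intervalIntegrable _ _
  -- Step 2: the difference
  set θ : ℝ := |φ₁ - φ₂| with hθ_def
  have hdiff : (∫ τ in (-π)..π, g (τ + φ₁) / (1 + r ^ 2 - 2 * r * Real.cos τ))
      - (∫ τ in (-π)..π, g (τ + φ₂) / (1 + r ^ 2 - 2 * r * Real.cos τ))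
      = ∫ τ in (-π)..π,
          (g (τ + φ₁) - g (τ + φ₂)) / (1 + r ^ 2 - 2 * r * Real.cos τ) := by
    rw [← intervalIntegral.integral_sub (hint φ₁) (hint φ₂)]
    congr 1; funext τ; rw [div_sub_div_same]
  -- Step 3: bound the difference integral
  have hbound : |∫ τ in (-π)..π,
      (g (τ + φ₁) - g (τ + φ₂)) / (1 + r ^ 2 - 2 * r * Real.cos τ)|
      ≤ Cg * θ ^ α * ∫ τ in (-π)..π, 1 / (1 + r ^ 2 - 2 * r * Real.cos τ) := by
    have hintK2 : IntervalIntegrable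
        (fun τ => Cg * θ ^ α * (1 / (1 + r ^ 2 - 2 * r * Real.cos τ)))
        MeasureTheory.volume (-π) π := hintK.const_mul _
    have h1 : ∀ τ : ℝ, ‖(g (τ + φ₁) - g (τ + φ₂)) / (1 + r ^ 2 - 2 * r * Real.cos τ)‖
        ≤ Cg * θ ^ α * (1 / (1 + r ^ 2 - 2 * r * Real.cos τ)) := by
      intro τ
      rw [Real.norm_eq_abs, abs_div, abs_of_pos (hD τ)]
      rw [mul_one_div]
      refine div_le_div_of_nonneg_right ?_ (hD τ).le
      have := hhold (τ + φ₁) (τ + φ₂)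
      rwa [show τ + φ₁ - (τ + φ₂) = φ₁ - φ₂ by ring] at this
    have := intervalIntegral.norm_integral_le_abs_of_norm_le
      (f := fun τ => (g (τ + φ₁) - g (τ + φ₂)) / (1 + r ^ 2 - 2 * r * Real.cos τ))
      (μ := MeasureTheory.volume) (a := -π) (b := π)
      (Filter.Eventually.of_forall fun t => h1 t) hintK2
    rw [Real.norm_eq_abs] at this
    refine this.trans ?_
    rw [intervalIntegral.integral_const_mul, abs_mul]
    have hθnn : 0 ≤ Cg * θ ^ α := by positivity
    have hKnn : 0 ≤ ∫ τ in (-π)..π, 1 / (1 + r ^ 2 - 2 * r * Real.cos τ) :=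
      intervalIntegral.integral_nonneg (by linarith) (fun x _ => (one_div_pos.mpr (hD x)).le)
    rw [abs_of_nonneg hθnn, abs_of_nonneg hKnn]
  -- Step 4: angle vs chord
  set chord : ℝ := ‖(r : ℂ) * Complex.exp (φ₁ * Complex.I)
      - (r : ℂ) * Complex.exp (φ₂ * Complex.I)‖ with hchord_def
  have hchordnn : 0 ≤ chord := norm_nonneg _
  have hθchord : θ ≤ π / 2 * chord := by
    have hce : chord = 2 * r * |Real.sin ((φ₁ - φ₂) / 2)| :=
      chord_eq r φ₁ φ₂ (by linarith)
    have habs_sin : Real.sin (θ / 2) ≤ |Real.sin ((φ₁ - φ₂) / 2)| := by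
      rcases le_or_gt 0 (φ₁ - φ₂) with h | h
      · rw [hθ_def, abs_of_nonneg h]; exact le_abs_self _
      · rw [hθ_def, abs_of_neg h, show -(φ₁ - φ₂) / 2 = -((φ₁ - φ₂) / 2) by ring,
          Real.sin_neg]
        exact neg_le_abs _
    have hsin : 2 / π * (θ / 2) ≤ Real.sin (θ / 2) := by
      exact Real.mul_le_sin (by positivity) (by linarith [hφ])
    have h2r : 2 * Real.sin (θ / 2) ≤ chord := by
      rw [hce]
      have h1 : Real.sin (θ / 2) ≤ |Real.sin ((φ₁ - φ₂) / 2)| := habs_sin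
      nlinarith [abs_nonneg (Real.sin ((φ₁ - φ₂) / 2))]
    have : 2 / π * θ ≤ chord := by
      calc 2 / π * θ = 2 * (2 / π * (θ / 2)) := by ring
        _ ≤ 2 * Real.sin (θ / 2) := by linarith
        _ ≤ chord := h2r
    have h4 := mul_le_mul_of_nonneg_left this (by positivity : (0:ℝ) ≤ π / 2)
    have h5 : π / 2 * (2 / π * θ) = θ := by field_simp
    linarith [h4, h5]
  -- Step 5: assemble
  have hmain : |((1 - r ^ 2) / (2 * π) * ∫ τ in (-π)..π,
        g τ / (1 + r ^ 2 - 2 * r * Real.cos (τ - φ₁)))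
      - (1 - r ^ 2) / (2 * π) * ∫ τ in (-π)..π,
        g τ / (1 + r ^ 2 - 2 * r * Real.cos (τ - φ₂))|
      ≤ 3 * (Cg * θ ^ α) := by
    rw [hshift φ₁, hshift φ₂, ← mul_sub, hdiff, abs_mul]
    have habs1 : |(1 - r ^ 2) / (2 * π)| = (r ^ 2 - 1) / (2 * π) := by
      rw [abs_div, abs_of_pos (by linarith : (0:ℝ) < 2 * π),
        abs_of_nonpos (by nlinarith : (1:ℝ) - r ^ 2 ≤ 0)]
      ring
    rw [habs1]
    calc (r ^ 2 - 1) / (2 * π) * |∫ τ in (-π)..π,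
          (g (τ + φ₁) - g (τ + φ₂)) / (1 + r ^ 2 - 2 * r * Real.cos τ)|
        ≤ (r ^ 2 - 1) / (2 * π)
          * (Cg * θ ^ α * ∫ τ in (-π)..π, 1 / (1 + r ^ 2 - 2 * r * Real.cos τ)) := by
          apply mul_le_mul_of_nonneg_left hbound
          apply div_nonneg (by nlinarith) (by linarith)
      _ = Cg * θ ^ α * ((r ^ 2 - 1) / (2 * π)
            * ∫ τ in (-π)..π, 1 / (1 + r ^ 2 - 2 * r * Real.cos τ)) := by ring
      _ ≤ Cg * θ ^ α * 3 := by
          apply mul_le_mul_of_nonneg_left (kernel_bound hr) (by positivity)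
      _ = 3 * (Cg * θ ^ α) := by ring
  refine hmain.trans ?_
  have hrpow : θ ^ α ≤ π / 2 * chord ^ α := by
    calc θ ^ α ≤ (π / 2 * chord) ^ α :=
          Real.rpow_le_rpow (abs_nonneg _) hθchord hα0.le
      _ = (π / 2) ^ α * chord ^ α := Real.mul_rpow (by positivity) hchordnn
      _ ≤ π / 2 * chord ^ α := by
          apply mul_le_mul_of_nonneg_right _ (Real.rpow_nonneg hchordnn α)
          calc (π / 2) ^ α ≤ (π / 2) ^ (1 : ℝ) :=
                Real.rpow_le_rpow_of_exponent_le (by linarith [Real.pi_gt_three]) hα1.le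
            _ = π / 2 := Real.rpow_one _
  calc 3 * (Cg * θ ^ α) ≤ 3 * (Cg * (π / 2 * chord ^ α)) := by
        apply mul_le_mul_of_nonneg_left _ (by norm_num)
        exact mul_le_mul_of_nonneg_left hrpow hCg
    _ = 3 * (π / 2) * Cg * chord ^ α := by ring
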